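/- Let Ω ⊂ ℂⁿ be a domain and f : Ω → ℂ holomorphic. If the family ℱ = { f ∘ φ : φ : 𝔻 → Ω holomorphic } is a normal family on the unit disc 𝔻, then there is a finite constant C > 0 such that for all z ∈ Ω and all v ∈ ℂⁿ, |f'(z)(v)|² / (1 + |f(z)|²)² ≤ C · F_K(z, v)², where F_K is the Kobayashi metric of Ω. -/

import Mathlib

open Metric Set Filter
open Topology

noncomputable section

/-- A family `𝓕` of functions is a normal family (in the sense of Montel) on `Ω`. -/
def NormalFamilyOn {E : Type*} [NormedAddCommGroup E] [NormedSpace ℂ E]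
    (𝓕 : Set (E → ℂ)) (Ω : Set E) : Prop :=
  ∀ F : ℕ → (E → ℂ), (∀ j, F j ∈ 𝓕) →
    ∃ φ : ℕ → ℕ, StrictMono φ ∧
      ((∃ g : E → ℂ, DifferentiableOn ℂ g Ω ∧
          ∀ K ⊆ Ω, IsCompact K → TendstoUniformlyOn (fun j => F (φ j)) g atTop K) ∨
       (∀ M : ℝ, 0 < M → ∀ K ⊆ Ω, IsCompact K →
          ∀ᶠ j in atTop, ∀ z ∈ K, M ≤ ‖F (φ j) z‖))

/-- The Kobayashi metric of a domain `Ω`: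
`F_K(z, v) = inf {α > 0 : ∃ holomorphic φ : 𝔻 → Ω, φ(0) = z, φ'(0) = v/α}`. -/
def kobayashiMetric {E : Type*} [NormedAddCommGroup E] [NormedSpace ℂ E]
    (Ω : Set E) (z v : E) : ℝ :=
  sInf {α : ℝ | 0 < α ∧ ∃ φ : ℂ → E, DifferentiableOn ℂ φ (ball (0 : ℂ) 1) ∧
    Set.MapsTo φ (ball (0 : ℂ) 1) Ω ∧ φ 0 = z ∧ fderiv ℂ φ 0 1 = (α : ℂ)⁻¹ • v}

def sphD0 (F : ℂ → ℂ) : ℝ := ‖deriv F 0‖ / (1 + ‖F 0‖ ^ 2)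

lemma sphD0_nonneg (F : ℂ → ℂ) : 0 ≤ sphD0 F := by
  unfold sphD0; positivity

lemma sphD0_le_abs_deriv (F : ℂ → ℂ) : sphD0 F ≤ ‖deriv F 0‖ := by
  unfold sphD0
  exact div_le_self (by positivity) (le_add_of_nonneg_right (by positivity))

lemma bounded_sphD0 (𝓕 : Set (ℂ → ℂ))
    (hdiff : ∀ F ∈ 𝓕, DifferentiableOn ℂ F (ball (0:ℂ) 1))
    (hnormal : NormalFamilyOn 𝓕 (ball (0:ℂ) 1)) :
    ∃ B : ℝ, 0 < B ∧ ∀ F ∈ 𝓕, sphD0 F ≤ B := by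
  by_contra hB
  push_neg at hB
  have hB' : ∀ j : ℕ, ∃ F, F ∈ 𝓕 ∧ (j : ℝ) < sphD0 F := by
    intro j
    obtain ⟨F, hF1, hF2⟩ := hB ((j : ℝ) + 1) (by positivity)
    exact ⟨F, hF1, by linarith⟩
  choose F hFmem hFlt using hB'
  obtain ⟨σ, hσ, hcase⟩ := hnormal F hFmem
  have hσle : ∀ j : ℕ, (j : ℝ) ≤ (σ j : ℝ) := fun j => by exact_mod_cast hσ.le_apply
  have h0mem : (0:ℂ) ∈ ball (0:ℂ) 1 := by simp
  rcases hcase with ⟨g, hg, hTU⟩ | hdiv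
  · -- convergence case
    have hlu : TendstoLocallyUniformlyOn (fun j => F (σ j)) g atTop (ball (0:ℂ) 1) :=
      (tendstoLocallyUniformlyOn_iff_forall_isCompact isOpen_ball).2
        (fun K hK hKc => hTU K hK hKc)
    have hder := hlu.deriv (Eventually.of_forall fun j => hdiff _ (hFmem (σ j))) isOpen_ball
    have hd0 : Tendsto (fun j => deriv (F (σ j)) 0) atTop (𝓝 (deriv g 0)) :=
      hder.tendsto_at h0mem
    have habs : Tendsto (fun j => ‖deriv (F (σ j)) 0‖) atTop
        (𝓝 (‖deriv g 0‖)) := (continuous_norm.tendsto _).comp hd0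
    have hbd : ∀ᶠ j in atTop,
        ‖deriv (F (σ j)) 0‖ ≤ ‖deriv g 0‖ + 1 :=
      habs.eventually (eventually_le_nhds (lt_add_one _))
    have hbig : ∀ᶠ j : ℕ in atTop, ‖deriv g 0‖ + 1 < (j : ℝ) :=
      tendsto_natCast_atTop_atTop.eventually_gt_atTop _
    obtain ⟨j, hj1, hj2⟩ := (hbd.and hbig).exists
    have h1 := hFlt (σ j)
    have h2 := sphD0_le_abs_deriv (F (σ j))
    have h3 := hσle j
    linarith
  · -- divergence case
    have hKsub : closedBall (0:ℂ) (1/2) ⊆ ball (0:ℂ) 1 :=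
      closedBall_subset_ball (by norm_num)
    have hKc : IsCompact (closedBall (0:ℂ) (1/2)) := isCompact_closedBall _ _
    have h1 := hdiv 1 one_pos _ hKsub hKc
    set h : ℕ → ℂ → ℂ := fun j w => (F (σ j) w)⁻¹ with hh
    have hne : ∀ᶠ j in atTop, ∀ w ∈ closedBall (0:ℂ) (1/2), F (σ j) w ≠ 0 := by
      filter_upwards [h1] with j hj w hw h0
      have := hj w hw
      rw [h0] at this; simp at this; linarith
    have hdiffh : ∀ᶠ j in atTop, DifferentiableOn ℂ (h j) (ball (0:ℂ) (1/2)) := by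
      filter_upwards [hne] with j hj
      refine DifferentiableOn.inv ?_ ?_
      · exact (hdiff _ (hFmem (σ j))).mono ((ball_subset_closedBall).trans hKsub)
      · exact fun x hx => hj x (ball_subset_closedBall hx)
    have hTU0 : TendstoLocallyUniformlyOn h (fun _ => (0:ℂ)) atTop (ball (0:ℂ) (1/2)) := by
      rw [tendstoLocallyUniformlyOn_iff_forall_isCompact isOpen_ball]
      intro K hK hKc'
      rw [Metric.tendstoUniformlyOn_iff]
      intro ε hε
      have hK1 : K ⊆ ball (0:ℂ) 1 := hK.trans (ball_subset_ball (by norm_num))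
      filter_upwards [hdiv (2/ε) (by positivity) K hK1 hKc'] with j hj x hx
      have hFx := hj x hx
      have hinv : (‖F (σ j) x‖)⁻¹ ≤ (2/ε)⁻¹ :=
        inv_anti₀ (by positivity) hFx
      have heq : (2/ε)⁻¹ = ε/2 := by rw [inv_div]
      have h2 : dist (0:ℂ) (h j x) = (‖F (σ j) x‖)⁻¹ := by
        rw [dist_comm, dist_zero_right, hh]
        simp
      rw [h2]
      linarith
    have hder := hTU0.deriv hdiffh isOpen_ball
    have h0mem' : (0:ℂ) ∈ ball (0:ℂ) (1/2) := by norm_num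
    have hd0 := hder.tendsto_at h0mem'
    simp only [Function.comp, deriv_const'] at hd0
    have habs : Tendsto (fun j => ‖deriv (h j) 0‖) atTop (𝓝 0) := by
      have := (continuous_norm.tendsto _).comp hd0
      simpa [Function.comp_def] using this
    have hsmall : ∀ᶠ j in atTop, ‖deriv (h j) 0‖ < 1 :=
      habs.eventually (eventually_lt_nhds one_pos)
    obtain ⟨j, hjne, hjsmall, hjge, hjF1⟩ :=
      (hne.and (hsmall.and ((eventually_ge_atTop 1).and h1))).exists
    have hF0 : F (σ j) 0 ≠ 0 := hjne 0 (by norm_num)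
    have hFdAt : DifferentiableAt ℂ (F (σ j)) 0 :=
      (hdiff _ (hFmem (σ j))).differentiableAt (isOpen_ball.mem_nhds h0mem)
    have hderiv_h : deriv (h j) 0 = -deriv (F (σ j)) 0 / (F (σ j) 0) ^ 2 :=
      deriv_inv'' hFdAt hF0
    have hF0abs : (1:ℝ) ≤ ‖F (σ j) 0‖ := hjF1 0 (by norm_num)
    have habsval : ‖deriv (h j) 0‖
        = ‖deriv (F (σ j)) 0‖ / (‖F (σ j) 0‖)^2 := by
      rw [hderiv_h, norm_div, norm_neg, norm_pow]
    have hle : sphD0 (F (σ j)) ≤ ‖deriv (F (σ j)) 0‖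
        / (‖F (σ j) 0‖)^2 := by
      unfold sphD0
      gcongr <;> nlinarith
    have h2 := hFlt (σ j)
    have h3 := hσle j
    have h4 : (1:ℝ) ≤ (j:ℝ) := by exact_mod_cast hjge
    rw [habsval] at hjsmall
    linarith

/-- If `f` is holomorphic on a domain `Ω ⊂ ℂⁿ` and the family
`{f ∘ φ : φ : 𝔻 → Ω holomorphic}` is normal on the unit disc, then the Levi form of
`log(1+|f|²)` is bounded by a constant multiple of the square of the Kobayashi metric. -/
theorem kobayashi_bound_of_normal_family
    (n : ℕ) (Ω : Set (EuclideanSpace ℂ (Fin n)))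
    (hΩopen : IsOpen Ω) (hΩconn : IsConnected Ω)
    (f : EuclideanSpace ℂ (Fin n) → ℂ)
    (hf : DifferentiableOn ℂ f Ω)
    (hnormal : NormalFamilyOn
      {F : ℂ → ℂ | ∃ φ : ℂ → EuclideanSpace ℂ (Fin n),
        DifferentiableOn ℂ φ (ball (0 : ℂ) 1) ∧
        Set.MapsTo φ (ball (0 : ℂ) 1) Ω ∧ F = f ∘ φ}
      (ball (0 : ℂ) 1)) :
    ∃ C : ℝ, 0 < C ∧ ∀ z ∈ Ω, ∀ v : EuclideanSpace ℂ (Fin n),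
      ‖fderiv ℂ f z v‖ ^ 2 / (1 + ‖f z‖ ^ 2) ^ 2 ≤
        C * (kobayashiMetric Ω z v) ^ 2 := by
  set 𝓕 : Set (ℂ → ℂ) := {F : ℂ → ℂ | ∃ φ : ℂ → EuclideanSpace ℂ (Fin n),
        DifferentiableOn ℂ φ (ball (0 : ℂ) 1) ∧
        Set.MapsTo φ (ball (0 : ℂ) 1) Ω ∧ F = f ∘ φ} with h𝓕
  have hdiff : ∀ F ∈ 𝓕, DifferentiableOn ℂ F (ball (0:ℂ) 1) := by
    rintro F ⟨φ, hφd, hφm, rfl⟩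
    exact hf.comp hφd hφm
  obtain ⟨B, hB0, hB⟩ := bounded_sphD0 𝓕 hdiff hnormal
  refine ⟨B ^ 2, by positivity, ?_⟩
  intro z hz v
  set A : Set ℝ := {α : ℝ | 0 < α ∧ ∃ φ : ℂ → EuclideanSpace ℂ (Fin n),
      DifferentiableOn ℂ φ (ball (0 : ℂ) 1) ∧
      Set.MapsTo φ (ball (0 : ℂ) 1) Ω ∧ φ 0 = z ∧
      fderiv ℂ φ 0 1 = (α : ℂ)⁻¹ • v} with hA
  have hKob : kobayashiMetric Ω z v = sInf A := rfl
  -- A is nonempty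
  obtain ⟨ε, hε0, hεΩ⟩ := Metric.isOpen_iff.1 hΩopen z hz
  have hAne : A.Nonempty := by
    set α₀ : ℝ := 2 * (‖v‖ + 1) / ε with hα₀
    have hα₀pos : 0 < α₀ := by positivity
    set w : EuclideanSpace ℂ (Fin n) := ((α₀ : ℂ))⁻¹ • v with hw
    have hwnorm : ‖w‖ < ε := by
      rw [hw, norm_smul]
      have h1 : ‖((α₀:ℂ))⁻¹‖ = α₀⁻¹ := by
        rw [norm_inv, Complex.norm_real, Real.norm_of_nonneg hα₀pos.le]
      rw [h1, hα₀]
      rw [inv_div]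
      have hv1 : 0 < ‖v‖ + 1 := by positivity
      calc ε / (2 * (‖v‖ + 1)) * ‖v‖ < ε / (2 * (‖v‖ + 1)) * (2 * (‖v‖ + 1)) := by
            apply mul_lt_mul_of_pos_left _ (by positivity)
            nlinarith [norm_nonneg v]
        _ = ε := by field_simp
    refine ⟨α₀, hα₀pos, fun lam => z + lam • w, ?_, ?_, ?_, ?_⟩
    · exact ((differentiable_id.smul_const w).const_add z).differentiableOn
    · intro lam hlam
      apply hεΩ
      simp only [mem_ball] at hlam ⊢
      rw [dist_eq_norm]
      simp only [add_sub_cancel_left]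
      rw [norm_smul]
      calc ‖lam‖ * ‖w‖ ≤ 1 * ‖w‖ := by
            apply mul_le_mul_of_nonneg_right _ (norm_nonneg w)
            simpa [dist_eq_norm] using hlam.le
        _ = ‖w‖ := one_mul _
        _ < ε := hwnorm
    · simp
    · have hd : HasDerivAt (fun lam : ℂ => z + lam • w) w 0 := by
        simpa using ((hasDerivAt_id (0:ℂ)).smul_const w).const_add z
      rw [fderiv_apply_one_eq_deriv, hd.deriv]
  have hAbdd : BddBelow A := ⟨0, fun α hα => hα.1.le⟩
  set t : ℝ := ‖fderiv ℂ f z v‖ / (1 + ‖f z‖ ^ 2) with ht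
  have ht0 : 0 ≤ t := by positivity
  -- key inequality for each α ∈ A
  have hkey : ∀ α ∈ A, t ≤ B * α := by
    rintro α ⟨hα0, φ, hφd, hφm, hφ0, hφ'⟩
    have h0mem : (0:ℂ) ∈ ball (0:ℂ) 1 := by norm_num
    have hFmem : (f ∘ φ) ∈ 𝓕 := ⟨φ, hφd, hφm, rfl⟩
    have hS := hB _ hFmem
    have hφAt : DifferentiableAt ℂ φ 0 := hφd.differentiableAt (isOpen_ball.mem_nhds h0mem)
    have hfAt : DifferentiableAt ℂ f (φ 0) := by
      rw [hφ0]; exact hf.differentiableAt (hΩopen.mem_nhds hz)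
    have hcomp : deriv (f ∘ φ) 0 = (α:ℂ)⁻¹ * fderiv ℂ f z v := by
      rw [← fderiv_apply_one_eq_deriv, fderiv_comp 0 hfAt hφAt]
      simp only [ContinuousLinearMap.coe_comp', Function.comp_apply]
      rw [fderiv_apply_one_eq_deriv, ← fderiv_apply_one_eq_deriv, hφ', hφ0]
      rw [map_smul]
      simp [smul_eq_mul]
    have hval : sphD0 (f ∘ φ) = α⁻¹ * t := by
      unfold sphD0
      rw [hcomp]
      simp only [Function.comp_apply, hφ0, ht]
      rw [norm_mul, norm_inv, Complex.norm_real, Real.norm_of_nonneg hα0.le]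
      ring
    rw [hval] at hS
    calc t = α * (α⁻¹ * t) := by field_simp
      _ ≤ α * B := by exact mul_le_mul_of_nonneg_left hS hα0.le
      _ = B * α := mul_comm _ _
  have hInf0 : 0 ≤ sInf A := le_csInf hAne fun α hα => hα.1.le
  have htB : t ≤ B * sInf A := by
    have h1 : t / B ≤ sInf A := le_csInf hAne fun α hα => by
      rw [div_le_iff₀ hB0]
      calc t ≤ B * α := hkey α hα
        _ = α * B := mul_comm _ _
    calc t = t / B * B := by field_simp
      _ ≤ sInf A * B := mul_le_mul_of_nonneg_right h1 hB0.le
      _ = B * sInf A := mul_comm _ _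
  rw [hKob]
  have hLHS : ‖fderiv ℂ f z v‖ ^ 2 / (1 + ‖f z‖ ^ 2) ^ 2 = t ^ 2 := by
    rw [ht, div_pow]
  rw [hLHS]
  calc t ^ 2 ≤ (B * sInf A) ^ 2 := by
        apply pow_le_pow_left₀ ht0 htB
    _ = B ^ 2 * sInf A ^ 2 := mul_pow _ _ _
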